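/- Let ξ satisfy P(c₁ ≤ |ξ − ξ'| ≤ c₂) ≥ c₃ with ξ' an independent copy and constants 0 < c₁ < c₂, c₃ > 0. Then the random variable ζ = ξ − ξ' satisfies the same type of condition: there exist positive constants c₁' < c₂' and c₃' > 0 such that P(c₁' ≤ |ζ − ζ'| ≤ c₂') ≥ c₃', where ζ' is an independent copy of ζ. -/

import Mathlib

open MeasureTheory ProbabilityTheory

/-- Closure of the anti-concentration condition under symmetrized differences:
if `P(c₁ ≤ |ξ₀ - ξ₁| ≤ c₂) ≥ c₃` for iid copies `ξ₀, ξ₁, ξ₂, ξ₃` of `ξ`, then the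
difference `ζ = ξ₀ - ξ₁` satisfies the same type of condition, witnessed by the
independent copy `ζ' = ξ₂ - ξ₃`. -/
theorem anticoncentration_of_difference
    {Ω : Type*} [MeasureSpace Ω] [IsProbabilityMeasure (ℙ : Measure Ω)]
    (ξ : Fin 4 → Ω → ℝ) (hmeas : ∀ i, Measurable (ξ i))
    (hindep : iIndepFun ξ ℙ)
    (hid : ∀ i j, IdentDistrib (ξ i) (ξ j))
    (c₁ c₂ c₃ : ℝ) (hc₁ : 0 < c₁) (hc₁₂ : c₁ < c₂) (hc₃ : 0 < c₃)
    (hanti : ENNReal.ofReal c₃ ≤ ℙ {ω | c₁ ≤ |ξ 0 ω - ξ 1 ω| ∧ |ξ 0 ω - ξ 1 ω| ≤ c₂}) :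
    ∃ c₁' c₂' c₃' : ℝ, 0 < c₁' ∧ c₁' < c₂' ∧ 0 < c₃' ∧
      ENNReal.ofReal c₃' ≤
        ℙ {ω | c₁' ≤ |(ξ 0 ω - ξ 1 ω) - (ξ 2 ω - ξ 3 ω)| ∧
               |(ξ 0 ω - ξ 1 ω) - (ξ 2 ω - ξ 3 ω)| ≤ c₂'} := by
  classical
  set D : Ω → ℝ := fun ω => ξ 0 ω - ξ 1 ω with hD
  set D' : Ω → ℝ := fun ω => ξ 2 ω - ξ 3 ω with hD'
  have hDm : Measurable D := (hmeas 0).sub (hmeas 1)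
  have hD'm : Measurable D' := (hmeas 2).sub (hmeas 3)
  -- independence of D and D'
  have hInd : IndepFun D D' ℙ := by
    have := hindep.indepFun_sub_sub hmeas 0 1 2 3 (by decide) (by decide) (by decide) (by decide)
    simpa [hD, hD', Pi.sub_def] using this
  set μ : Measure ℝ := Measure.map (ξ 0) ℙ with hμ
  have hmap : ∀ i, Measure.map (ξ i) ℙ = μ := fun i => (hid i 0).map_eq
  -- joint laws of pairs
  have hpair : ∀ i j, i ≠ j →
      Measure.map (fun ω => (ξ i ω, ξ j ω)) ℙ = μ.prod μ := by
    intro i j hij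
    have h := (indepFun_iff_map_prod_eq_prod_map_map (hmeas i).aemeasurable
      (hmeas j).aemeasurable).mp (hindep.indepFun hij)
    rw [h, hmap i, hmap j]
  set lam : Measure ℝ := Measure.map D ℙ with hlam
  have sub_meas : Measurable (fun p : ℝ × ℝ => p.1 - p.2) :=
    measurable_fst.sub measurable_snd
  have hlaw : ∀ i j, i ≠ j → Measure.map (fun ω => ξ i ω - ξ j ω) ℙ = lam := by
    intro i j hij
    have h1 : Measure.map (fun ω => ξ i ω - ξ j ω) ℙ
        = Measure.map (fun p : ℝ × ℝ => p.1 - p.2)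
            (Measure.map (fun ω => (ξ i ω, ξ j ω)) ℙ) := by
      rw [Measure.map_map sub_meas ((hmeas i).prodMk (hmeas j))]
      rfl
    have h2 : Measure.map D ℙ
        = Measure.map (fun p : ℝ × ℝ => p.1 - p.2)
            (Measure.map (fun ω => (ξ 0 ω, ξ 1 ω)) ℙ) := by
      rw [Measure.map_map sub_meas ((hmeas 0).prodMk (hmeas 1))]
      rfl
    rw [hlam, h1, h2, hpair i j hij, hpair 0 1 (by decide)]
  have hlamD' : Measure.map D' ℙ = lam := hlaw 2 3 (by decide)
  -- symmetry of lam
  have hneg : Measure.map Neg.neg lam = lam := by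
    have : Measure.map Neg.neg lam = Measure.map (fun ω => ξ 1 ω - ξ 0 ω) ℙ := by
      rw [hlam, Measure.map_map measurable_neg hDm]
      congr 1
      funext ω
      simp only [Function.comp_apply, hD]
      ring
    rw [this, hlaw 1 0 (by decide)]
  -- joint law of (D, D')
  have hjoint : Measure.map (fun ω => (D ω, D' ω)) ℙ = lam.prod lam := by
    have h := (indepFun_iff_map_prod_eq_prod_map_map hDm.aemeasurable
      hD'm.aemeasurable).mp hInd
    rw [h, hlamD', hlam]
  -- the sets
  set I : Set ℝ := {a | c₁ ≤ |a| ∧ |a| ≤ c₂} with hI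
  have hIm : MeasurableSet I :=
    (measurableSet_le measurable_const measurable_abs).inter
      (measurableSet_le measurable_abs measurable_const)
  have hIneg : ∀ a : ℝ, (-a) ∈ I ↔ a ∈ I := by
    intro a; simp [hI]
  set T : Set (ℝ × ℝ) := {p | p.1 ∈ I ∧ p.2 ∈ I ∧ p.1 * p.2 ≤ 0} with hT
  set T' : Set (ℝ × ℝ) := {p | p.1 ∈ I ∧ p.2 ∈ I ∧ 0 ≤ p.1 * p.2} with hT'
  have hTm : MeasurableSet T :=
    (hIm.preimage measurable_fst).inter ((hIm.preimage measurable_snd).inter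
      (measurableSet_le (measurable_fst.mul measurable_snd) measurable_const))
  have hT'm : MeasurableSet T' :=
    (hIm.preimage measurable_fst).inter ((hIm.preimage measurable_snd).inter
      (measurableSet_le measurable_const (measurable_fst.mul measurable_snd)))
  -- lam I ≥ c₃
  have hlamI : ENNReal.ofReal c₃ ≤ lam I := by
    rw [hlam, Measure.map_apply hDm hIm]
    exact hanti
  -- flip symmetry : (lam.prod lam) T = (lam.prod lam) T'
  have hflip : (lam.prod lam) T = (lam.prod lam) T' := by
    have hg : Measurable (Prod.map (id : ℝ → ℝ) (Neg.neg : ℝ → ℝ)) :=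
      measurable_id.prodMap measurable_neg
    have hmapg : Measure.map (Prod.map (id : ℝ → ℝ) Neg.neg) (lam.prod lam)
        = lam.prod lam := by
      rw [← Measure.map_prod_map _ _ measurable_id measurable_neg, Measure.map_id, hneg]
    have hpre : Prod.map (id : ℝ → ℝ) (Neg.neg : ℝ → ℝ) ⁻¹' T = T' := by
      ext p
      simp only [hT, hT', Set.mem_preimage, Set.mem_setOf_eq, Prod.map, id_eq]
      constructor
      · rintro ⟨h1, h2, h3⟩
        exact ⟨h1, (hIneg p.2).mp h2, by nlinarith⟩
      · rintro ⟨h1, h2, h3⟩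
        exact ⟨h1, (hIneg p.2).mpr h2, by nlinarith⟩
    calc (lam.prod lam) T = Measure.map (Prod.map (id : ℝ → ℝ) Neg.neg) (lam.prod lam) T := by
          rw [hmapg]
      _ = (lam.prod lam) T' := by rw [Measure.map_apply hg hTm, hpre]
  -- covering
  have hcover : I ×ˢ I ⊆ T ∪ T' := by
    rintro ⟨a, b⟩ ⟨ha, hb⟩
    rcases le_total (a * b) 0 with h | h
    · exact Or.inl ⟨ha, hb, h⟩
    · exact Or.inr ⟨ha, hb, h⟩
  have hTbound : lam I * lam I ≤ 2 * (lam.prod lam) T := by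
    calc lam I * lam I = (lam.prod lam) (I ×ˢ I) := (Measure.prod_prod I I).symm
      _ ≤ (lam.prod lam) (T ∪ T') := measure_mono hcover
      _ ≤ (lam.prod lam) T + (lam.prod lam) T' := measure_union_le T T'
      _ = 2 * (lam.prod lam) T := by rw [← hflip]; ring
  -- T included in the target set
  have hTsub : T ⊆ {p : ℝ × ℝ | 2 * c₁ ≤ |p.1 - p.2| ∧ |p.1 - p.2| ≤ 2 * c₂} := by
    rintro ⟨a, b⟩ ⟨⟨ha1, ha2⟩, ⟨hb1, hb2⟩, hab⟩
    simp only [Set.mem_setOf_eq]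
    constructor
    · rcases le_or_gt 0 a with h | h
      · have hb0 : b ≤ 0 := by nlinarith [abs_of_nonneg h]
        rw [abs_of_nonneg h] at ha1
        rw [abs_of_nonpos hb0] at hb1
        rw [abs_of_nonneg (by linarith : (0:ℝ) ≤ a - b)]
        linarith
      · have ha0 : a ≤ 0 := le_of_lt h
        have hb0 : 0 ≤ b := by nlinarith [abs_of_nonpos ha0]
        rw [abs_of_nonpos ha0] at ha1
        rw [abs_of_nonneg hb0] at hb1
        rw [abs_of_nonpos (by linarith : a - b ≤ 0)]
        linarith
    · calc |a - b| ≤ |a| + |b| := abs_sub a b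
        _ ≤ 2 * c₂ := by linarith
  -- put it together
  refine ⟨2 * c₁, 2 * c₂, c₃ * c₃ / 2, by linarith, by linarith, by positivity, ?_⟩
  have hfinal : (lam.prod lam) T ≤
      ℙ {ω | 2 * c₁ ≤ |(ξ 0 ω - ξ 1 ω) - (ξ 2 ω - ξ 3 ω)| ∧
             |(ξ 0 ω - ξ 1 ω) - (ξ 2 ω - ξ 3 ω)| ≤ 2 * c₂} := by
    rw [← hjoint, Measure.map_apply (hDm.prodMk hD'm) hTm]
    refine measure_mono ?_
    intro ω hω
    exact hTsub hω
  refine le_trans ?_ hfinal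
  -- ENNReal arithmetic
  have h1 : ENNReal.ofReal (c₃ * c₃) ≤ 2 * (lam.prod lam) T := by
    calc ENNReal.ofReal (c₃ * c₃) = ENNReal.ofReal c₃ * ENNReal.ofReal c₃ :=
          ENNReal.ofReal_mul hc₃.le
      _ ≤ lam I * lam I := mul_le_mul' hlamI hlamI
      _ ≤ 2 * (lam.prod lam) T := hTbound
  have h2 : ENNReal.ofReal (c₃ * c₃ / 2) = ENNReal.ofReal (c₃ * c₃) / 2 := by
    rw [ENNReal.ofReal_div_of_pos (by norm_num)]
    norm_num
  rw [h2]
  rw [ENNReal.div_le_iff_le_mul (by norm_num) (by norm_num)]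
  calc ENNReal.ofReal (c₃ * c₃) ≤ 2 * (lam.prod lam) T := h1
    _ = (lam.prod lam) T * 2 := by ring
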